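/- arXiv:1310.6158 — 3 statements merged into one kernel-verified Lean document; each statement's English description precedes it below -/
import Mathlib

section
/- Let p be prime, K a number field, N the norm form of K, and f ∈ ℤ[x] a cubic with homogenization f(a,b). Suppose the equation f(t) = N(x₁,…,x_k) ≠ 0 has a solution over ℚ_p. Then there exist integers a₀, b₀ and l ∈ ℕ with b₀ ≢ 0 (mod p^l) and f(a₀,b₀) ≢ 0 (mod p^l), such that for all integers a ≡ a₀ (mod p^l) and b ≡ b₀ (mod p^l), both b and f(a,b) lie in N(ℚ_p^k) \ {0}. -/
open NumberField Polynomial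
open scoped TensorProduct

/-- The homogenization `f(a,b) = b³ f(a/b)` of a cubic polynomial `f`. -/
noncomputable def cubicHomog (f : Polynomial ℤ) (a b : ℤ) : ℤ :=
  ∑ i ∈ Finset.range 4, f.coeff i * a ^ i * b ^ (3 - i)

/-- The set of values of the norm form of `K/ℚ` on `ℚ_p^k`, realized via the norm of the
étale algebra `ℚ_p ⊗[ℚ] K`. -/
noncomputable def padicNormFormValues (K : Type) [Field K] [NumberField K] (k : ℕ)
    (ω : Module.Basis (Fin k) ℚ K) (p : ℕ) [Fact p.Prime] : Set ℚ_[p] :=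
  Set.range fun x : Fin k → ℚ_[p] =>
    Algebra.norm ℚ_[p] (∑ i, x i • ((1 : ℚ_[p]) ⊗ₜ[ℚ] (ω i)))

lemma kth_power_of_close {p : ℕ} [Fact p.Prime] (k : ℕ) (u : ℚ_[p])
    (h : ‖u - 1‖ < ‖(k : ℚ_[p])‖ ^ 2) : ∃ w : ℚ_[p], w ^ k = u := by
  have hu1 : ‖u‖ ≤ 1 := by
    have h1 : ‖(k : ℚ_[p])‖ ≤ 1 := by
      simpa using Padic.norm_int_le_one (p := p) (k : ℤ)
    have : ‖u - 1‖ < 1 := lt_of_lt_of_le h (by nlinarith [norm_nonneg ((k : ℚ_[p]))])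
    calc ‖u‖ = ‖(u - 1) + 1‖ := by ring_nf
    _ ≤ max ‖u - 1‖ ‖(1:ℚ_[p])‖ := Padic.nonarchimedean _ _
    _ ≤ 1 := by rw [norm_one]; exact max_le this.le le_rfl
  set U : ℤ_[p] := ⟨u, hu1⟩ with hU
  set F : Polynomial ℤ_[p] := X ^ k - C U with hF
  have heval : F.eval 1 = 1 - U := by simp [hF]
  have hderiv : F.derivative.eval 1 = (k : ℤ_[p]) := by simp [hF, derivative_X_pow]
  have hnorm : ‖F.eval 1‖ < ‖F.derivative.eval 1‖ ^ 2 := by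
    rw [heval, hderiv]
    have hc : ((1 - U : ℤ_[p]) : ℚ_[p]) = 1 - u := by push_cast; rfl
    have h1 : ‖(1 - U : ℤ_[p])‖ = ‖u - 1‖ := by
      rw [← PadicInt.padic_norm_e_of_padicInt, hc, norm_sub_rev]
    have h2 : ‖(k : ℤ_[p])‖ = ‖(k : ℚ_[p])‖ := by
      rw [← PadicInt.padic_norm_e_of_padicInt]; norm_cast
    rw [h1, h2]; exact h
  obtain ⟨z, hz, -⟩ := hensels_lemma hnorm
  refine ⟨(z : ℚ_[p]), ?_⟩
  have hzU : z ^ k = U := by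
    have := hz; simp [hF, sub_eq_zero] at this; exact this
  calc (z : ℚ_[p]) ^ k = ((z ^ k : ℤ_[p]) : ℚ_[p]) := by push_cast; ring
  _ = u := by rw [hzU]

section helpers

variable {p : ℕ} [Fact p.Prime] (K : Type) [Field K] [NumberField K] (k : ℕ)
  (ω : Module.Basis (Fin k) ℚ K)

lemma norm_mem_values (y : ℚ_[p] ⊗[ℚ] K) :
    Algebra.norm ℚ_[p] y ∈ padicNormFormValues K k ω p := by
  refine ⟨fun i => (ω.baseChange ℚ_[p]).repr y i, ?_⟩
  have hy : (∑ i, ((ω.baseChange ℚ_[p]).repr y i) • ((1 : ℚ_[p]) ⊗ₜ[ℚ] (ω i))) = y := by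
    conv_rhs => rw [← (ω.baseChange ℚ_[p]).sum_repr y]
    exact Finset.sum_congr rfl fun i _ => by rw [Module.Basis.baseChange_apply]
  exact congrArg (Algebra.norm ℚ_[p]) hy

lemma mul_mem_values {v w : ℚ_[p]} (hv : v ∈ padicNormFormValues K k ω p)
    (hw : w ∈ padicNormFormValues K k ω p) : v * w ∈ padicNormFormValues K k ω p := by
  obtain ⟨x, hx⟩ := hv
  obtain ⟨y, hy⟩ := hw
  dsimp only at hx hy
  have := norm_mem_values K k ω
    ((∑ i, x i • ((1 : ℚ_[p]) ⊗ₜ[ℚ] (ω i))) * (∑ i, y i • ((1 : ℚ_[p]) ⊗ₜ[ℚ] (ω i))))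
  rwa [map_mul, hx, hy] at this

lemma pow_mem_values (c : ℚ_[p]) : c ^ k ∈ padicNormFormValues K k ω p := by
  have hrank : Module.finrank ℚ_[p] (ℚ_[p] ⊗[ℚ] K) = k := by
    rw [Module.finrank_eq_card_basis (ω.baseChange ℚ_[p]), Fintype.card_fin]
  have := norm_mem_values K k ω (algebraMap ℚ_[p] (ℚ_[p] ⊗[ℚ] K) c)
  rwa [Algebra.norm_algebraMap, hrank] at this

lemma perturb_mem_values (hk : k ≠ 0) {v c : ℚ_[p]} (hv : v ∈ padicNormFormValues K k ω p)
    (hv0 : v ≠ 0) (hc : ‖c - v‖ < ‖v‖ * ‖(k : ℚ_[p])‖ ^ 2) :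
    c ∈ padicNormFormValues K k ω p ∧ c ≠ 0 := by
  have hkQ : ((k : ℚ_[p]) : ℚ_[p]) ≠ 0 := Nat.cast_ne_zero.mpr hk
  have hknorm : 0 < ‖(k : ℚ_[p])‖ := norm_pos_iff.mpr hkQ
  have hknorm1 : ‖(k : ℚ_[p])‖ ≤ 1 := by
    simpa using Padic.norm_int_le_one (p := p) (k : ℤ)
  have hvn : 0 < ‖v‖ := norm_pos_iff.mpr hv0
  have hc0 : c ≠ 0 := by
    intro h
    rw [h, zero_sub, norm_neg] at hc
    have h2 : ‖(k : ℚ_[p])‖ ^ 2 ≤ 1 := by nlinarith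
    nlinarith [mul_le_of_le_one_right hvn.le h2]
  have hu : ‖c / v - 1‖ < ‖(k : ℚ_[p])‖ ^ 2 := by
    have : c / v - 1 = (c - v) / v := by field_simp
    rw [this, norm_div]
    rw [div_lt_iff₀ hvn]
    linarith [hc, mul_comm ‖v‖ (‖(k : ℚ_[p])‖ ^ 2)]
  obtain ⟨w, hw⟩ := kth_power_of_close k (c / v) hu
  have : c = v * w ^ k := by rw [hw]; field_simp
  rw [this]
  exact ⟨mul_mem_values K k ω hv (pow_mem_values K k ω w), this ▸ hc0⟩

lemma cubicHomog_cast (f : Polynomial ℤ) (hdeg : f.natDegree = 3) {a b : ℤ}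
    (hb : (b : ℚ_[p]) ≠ 0) :
    (cubicHomog f a b : ℚ_[p]) =
      (b : ℚ_[p]) ^ 3 * (f.map (Int.castRingHom ℚ_[p])).eval ((a : ℚ_[p]) / (b : ℚ_[p])) := by
  have hd : (f.map (Int.castRingHom ℚ_[p])).natDegree < 4 := by
    calc (f.map (Int.castRingHom ℚ_[p])).natDegree ≤ f.natDegree := natDegree_map_le
    _ < 4 := by rw [hdeg]; norm_num
  rw [Polynomial.eval_eq_sum_range' hd, Finset.mul_sum]
  unfold cubicHomog
  push_cast
  refine Finset.sum_congr rfl fun i hi => ?_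
  rw [Finset.mem_range] at hi
  have hi3 : i ≤ 3 := by omega
  rw [Polynomial.coeff_map]
  simp only [eq_intCast]
  rw [div_pow]
  have hbpow : (b : ℚ_[p]) ^ 3 = (b : ℚ_[p]) ^ (3 - i) * (b : ℚ_[p]) ^ i := by
    rw [← pow_add, Nat.sub_add_cancel hi3]
  field_simp [hbpow]
  rw [hbpow]; ring

lemma cubicHomog_zmod (f : Polynomial ℤ) (n : ℕ) {a b a₀ b₀ : ℤ}
    (ha : (a : ZMod n) = (a₀ : ZMod n)) (hb : (b : ZMod n) = (b₀ : ZMod n)) :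
    ((cubicHomog f a b : ℤ) : ZMod n) = ((cubicHomog f a₀ b₀ : ℤ) : ZMod n) := by
  unfold cubicHomog
  push_cast
  rw [ha, hb]

end helpers

/-- If `f(t) = N(x₁,…,x_k) ≠ 0` has a solution over `ℚ_p`, then there are integers
`a₀, b₀` and `l ∈ ℕ` with `b₀, f(a₀,b₀) ≢ 0 (mod p^l)` such that for all integers
`a ≡ a₀` and `b ≡ b₀ (mod p^l)`, both `b` and `f(a,b)` are nonzero values of the norm
form over `ℚ_p`. -/
theorem stmt_4 (p : ℕ) [hp : Fact p.Prime] (K : Type) [Field K] [NumberField K]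
    (k : ℕ) (ω : Module.Basis (Fin k) ℚ K)
    (f : Polynomial ℤ) (hdeg : f.natDegree = 3)
    (hsol : ∃ t : ℚ_[p], ∃ x : Fin k → ℚ_[p],
      (f.map (Int.castRingHom ℚ_[p])).eval t =
        Algebra.norm ℚ_[p] (∑ i, x i • ((1 : ℚ_[p]) ⊗ₜ[ℚ] (ω i))) ∧
      Algebra.norm ℚ_[p] (∑ i, x i • ((1 : ℚ_[p]) ⊗ₜ[ℚ] (ω i))) ≠ 0) :
    ∃ (a₀ b₀ : ℤ) (l : ℕ),
      ¬ ((p : ℤ) ^ l ∣ b₀) ∧ ¬ ((p : ℤ) ^ l ∣ cubicHomog f a₀ b₀) ∧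
      ∀ a b : ℤ, a ≡ a₀ [ZMOD (p : ℤ) ^ l] → b ≡ b₀ [ZMOD (p : ℤ) ^ l] →
        ((b : ℚ_[p]) ∈ padicNormFormValues K k ω p ∧ (b : ℚ_[p]) ≠ 0) ∧
        ((cubicHomog f a b : ℚ_[p]) ∈ padicNormFormValues K k ω p ∧
          (cubicHomog f a b : ℚ_[p]) ≠ 0) := by
  classical
  obtain ⟨t, x, heq, hne⟩ := hsol
  set v : ℚ_[p] := Algebra.norm ℚ_[p] (∑ i, x i • ((1 : ℚ_[p]) ⊗ₜ[ℚ] (ω i))) with hv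
  have hvP : v ∈ padicNormFormValues K k ω p := norm_mem_values K k ω _
  -- k ≠ 0
  have hk : k ≠ 0 := by
    have h1 : Module.finrank ℚ K = k := by
      rw [Module.finrank_eq_card_basis ω, Fintype.card_fin]
    have h2 : 0 < Module.finrank ℚ K := Module.finrank_pos
    omega
  have hknorm : 0 < ‖(k : ℚ_[p])‖ := norm_pos_iff.mpr (Nat.cast_ne_zero.mpr hk)
  have hknorm1 : ‖(k : ℚ_[p])‖ ≤ 1 := by
    simpa using Padic.norm_int_le_one (p := p) (k : ℤ)
  have hvn : 0 < ‖v‖ := norm_pos_iff.mpr hne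
  -- continuity of evaluation
  set e : ℚ_[p] → ℚ_[p] := fun s => (f.map (Int.castRingHom ℚ_[p])).eval s with he
  have hcont : ContinuousAt e t := (f.map (Int.castRingHom ℚ_[p])).continuous.continuousAt
  rw [Metric.continuousAt_iff] at hcont
  have hε : 0 < ‖v‖ * ‖(k : ℚ_[p])‖ ^ 2 := by positivity
  obtain ⟨δ, hδ, hδ'⟩ := hcont _ hε
  -- rational approximation
  obtain ⟨r, hr⟩ := Padic.rat_dense p t hδ
  have hre : ‖e (r : ℚ_[p]) - v‖ < ‖v‖ * ‖(k : ℚ_[p])‖ ^ 2 := by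
    have h2 := hδ' (x := (r : ℚ_[p])) (by rw [dist_eq_norm, norm_sub_rev]; exact hr)
    rw [dist_eq_norm] at h2
    have h3 : e t = v := heq
    rwa [h3] at h2
  set w : ℚ_[p] := e (r : ℚ_[p]) with hw
  obtain ⟨hwP, hw0⟩ := perturb_mem_values K k ω hk hvP hne hre
  -- integers
  set a₁ : ℤ := r.num with ha₁
  set b₁ : ℤ := (r.den : ℤ) with hb₁
  have hb₁0 : (b₁ : ℚ_[p]) ≠ 0 := by
    rw [hb₁]; push_cast
    exact_mod_cast Nat.cast_ne_zero.mpr r.den_nz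
  set a₀ : ℤ := b₁ ^ (k - 1) * a₁ with ha₀
  set b₀ : ℤ := b₁ ^ k with hb₀def
  have hb₀Q : ((b₀ : ℤ) : ℚ_[p]) = (b₁ : ℚ_[p]) ^ k := by rw [hb₀def]; push_cast; ring
  have hb₀0 : ((b₀ : ℤ) : ℚ_[p]) ≠ 0 := by rw [hb₀Q]; exact pow_ne_zero _ hb₁0
  have hb₀P : ((b₀ : ℤ) : ℚ_[p]) ∈ padicNormFormValues K k ω p := by
    rw [hb₀Q]; exact pow_mem_values K k ω _
  have hratio : ((a₀ : ℤ) : ℚ_[p]) / ((b₀ : ℤ) : ℚ_[p]) = (r : ℚ_[p]) := by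
    have hk1 : (b₁ : ℚ_[p]) ^ k = (b₁ : ℚ_[p]) ^ (k - 1) * (b₁ : ℚ_[p]) := by
      rw [← pow_succ, Nat.sub_add_cancel (Nat.one_le_iff_ne_zero.mpr hk)]
    rw [ha₀, hb₀def]
    push_cast
    rw [hk1, Rat.cast_def]
    have hbne : (b₁ : ℚ_[p]) ^ (k - 1) ≠ 0 := pow_ne_zero _ hb₁0
    rw [ha₁, hb₁]
    push_cast
    field_simp
  set c₀ : ℤ := cubicHomog f a₀ b₀ with hc₀def
  have hc₀Q : ((c₀ : ℤ) : ℚ_[p]) = ((b₁ : ℚ_[p]) ^ 3) ^ k * w := by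
    rw [hc₀def, cubicHomog_cast f hdeg hb₀0, hratio, hb₀Q, ← pow_mul, ← pow_mul, Nat.mul_comm]
  have hc₀P : ((c₀ : ℤ) : ℚ_[p]) ∈ padicNormFormValues K k ω p := by
    rw [hc₀Q]; exact mul_mem_values K k ω (pow_mem_values K k ω _) hwP
  have hc₀0 : ((c₀ : ℤ) : ℚ_[p]) ≠ 0 := by
    rw [hc₀Q]
    exact mul_ne_zero (pow_ne_zero _ (pow_ne_zero _ hb₁0)) hw0
  -- choose l
  have hbn : 0 < ‖((b₀ : ℤ) : ℚ_[p])‖ := norm_pos_iff.mpr hb₀0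
  have hcn : 0 < ‖((c₀ : ℤ) : ℚ_[p])‖ := norm_pos_iff.mpr hc₀0
  set m : ℝ := min (‖((b₀ : ℤ) : ℚ_[p])‖ * ‖(k : ℚ_[p])‖ ^ 2)
      (‖((c₀ : ℤ) : ℚ_[p])‖ * ‖(k : ℚ_[p])‖ ^ 2) with hm
  have hm0 : 0 < m := lt_min (by positivity) (by positivity)
  have hpinv : (p : ℝ)⁻¹ < 1 := by
    rw [inv_lt_one_iff₀]
    right
    exact_mod_cast hp.1.one_lt
  have hpinv0 : 0 ≤ (p : ℝ)⁻¹ := by positivity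
  obtain ⟨l, hl⟩ := exists_pow_lt_of_lt_one hm0 hpinv
  have hplm : (p : ℝ) ^ (-(l : ℤ)) < m := by
    rwa [zpow_neg, zpow_natCast, ← inv_pow]
  -- divisibility consequences
  have hdvd_iff : ∀ z : ℤ, ((p : ℤ) ^ l ∣ z) ↔ ‖(z : ℚ_[p])‖ ≤ (p : ℝ) ^ (-(l : ℤ)) := by
    intro z
    rw [Padic.norm_int_le_pow_iff_dvd]
  refine ⟨a₀, b₀, l, ?_, ?_, ?_⟩
  · intro hdvd
    rw [hdvd_iff] at hdvd
    have h1 : ‖((b₀ : ℤ) : ℚ_[p])‖ < m := lt_of_le_of_lt hdvd hplm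
    have h2 : m ≤ ‖((b₀ : ℤ) : ℚ_[p])‖ * ‖(k : ℚ_[p])‖ ^ 2 := min_le_left _ _
    have hk2 : ‖(k : ℚ_[p])‖ ^ 2 ≤ 1 := by nlinarith
    have h3 : ‖((b₀ : ℤ) : ℚ_[p])‖ * ‖(k : ℚ_[p])‖ ^ 2 ≤ ‖((b₀ : ℤ) : ℚ_[p])‖ :=
      mul_le_of_le_one_right hbn.le hk2
    linarith
  · intro hdvd
    rw [hdvd_iff] at hdvd
    have h1 : ‖((c₀ : ℤ) : ℚ_[p])‖ < m := lt_of_le_of_lt hdvd hplm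
    have h2 : m ≤ ‖((c₀ : ℤ) : ℚ_[p])‖ * ‖(k : ℚ_[p])‖ ^ 2 := min_le_right _ _
    have hk2 : ‖(k : ℚ_[p])‖ ^ 2 ≤ 1 := by nlinarith
    have h3 : ‖((c₀ : ℤ) : ℚ_[p])‖ * ‖(k : ℚ_[p])‖ ^ 2 ≤ ‖((c₀ : ℤ) : ℚ_[p])‖ :=
      mul_le_of_le_one_right hcn.le hk2
    linarith
  · intro a b ha hb
    have hmodcast : ∀ z z' : ℤ, z ≡ z' [ZMOD (p : ℤ) ^ l] → ‖((z : ℚ_[p])) - ((z' : ℚ_[p]))‖ ≤ (p : ℝ) ^ (-(l : ℤ)) := by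
      intro z z' hzz
      have hdvd : (p : ℤ) ^ l ∣ z - z' := (Int.ModEq.dvd hzz.symm)
      have := (hdvd_iff (z - z')).mp hdvd
      push_cast at this
      exact this
    constructor
    · have hclose : ‖(b : ℚ_[p]) - ((b₀ : ℤ) : ℚ_[p])‖ < ‖((b₀ : ℤ) : ℚ_[p])‖ * ‖(k : ℚ_[p])‖ ^ 2 :=
        lt_of_le_of_lt (hmodcast b b₀ hb) (lt_of_lt_of_le hplm (min_le_left _ _))
      exact perturb_mem_values K k ω hk hb₀P hb₀0 hclose
    · -- congruence for cubicHomog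
      have hmodc : cubicHomog f a b ≡ c₀ [ZMOD (p : ℤ) ^ l] := by
        have hcast : ((p : ℤ) ^ l) = ((p ^ l : ℕ) : ℤ) := by push_cast; ring
        rw [hcast] at ha hb ⊢
        rw [← ZMod.intCast_eq_intCast_iff] at ha hb ⊢
        exact cubicHomog_zmod f (p ^ l) ha hb
      have hclose : ‖((cubicHomog f a b : ℤ) : ℚ_[p]) - ((c₀ : ℤ) : ℚ_[p])‖ <
          ‖((c₀ : ℤ) : ℚ_[p])‖ * ‖(k : ℚ_[p])‖ ^ 2 :=
        lt_of_le_of_lt (hmodcast _ _ hmodc) (lt_of_lt_of_le hplm (min_le_right _ _))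
      exact perturb_mem_values K k ω hk hc₀P hc₀0 hclose
end

section
/- Let d, e, Δ ∈ ℕ with gcd(d,Δ) = 1 and e | d. Let (a,b) ∈ ℤ² with gcd(a,b,d) = 1, and let λ(x,eΔ) be the lattice of points in ℤ² that are congruent modulo d to an integer multiple of (a,b) and are divisible by eΔ (i.e. both coordinates divisible by eΔ). Then λ(x,eΔ) is a sublattice of ℤ² of index deΔ², i.e. |det λ(x,eΔ)| = deΔ². -/
private lemma aux_leftRel_prod {G G' : Type*} [AddGroup G] [AddGroup G']
    (H : AddSubgroup G) (K : AddSubgroup G') :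
    QuotientAddGroup.leftRel (H.prod K) =
      (QuotientAddGroup.leftRel H).prod (QuotientAddGroup.leftRel K) := by
  refine Setoid.ext fun x y => ?_
  rw [QuotientAddGroup.leftRel_apply]
  constructor
  · intro h
    exact ⟨QuotientAddGroup.leftRel_apply.mpr h.1, QuotientAddGroup.leftRel_apply.mpr h.2⟩
  · rintro ⟨h1, h2⟩
    exact ⟨QuotientAddGroup.leftRel_apply.mp h1, QuotientAddGroup.leftRel_apply.mp h2⟩

private lemma aux_index_prod {G G' : Type*} [AddGroup G] [AddGroup G']
    (H : AddSubgroup G) (K : AddSubgroup G') :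
    (H.prod K).index = H.index * K.index := by
  simp_rw [AddSubgroup.index, ← Nat.card_prod]
  refine Nat.card_congr
    ((Quotient.congrRight (fun x y ↦ ?_)).trans (Setoid.prodQuotientEquiv _ _).symm)
  rw [aux_leftRel_prod]

/-- Let `d, e, Δ ∈ ℕ` with `gcd(d,Δ) = 1` and `e ∣ d`, and let `(a,b)` be primitive
modulo `d`.  The lattice of points of `ℤ²` congruent mod `d` to an integer multiple of
`(a,b)` and with both coordinates divisible by `eΔ` has determinant (= index in `ℤ²`)
equal to `d·e·Δ²`. -/
theorem stmt_6 (d e Δ : ℕ) (hd : 0 < d) (hΔ : 0 < Δ) (he : e ∣ d) (hcop : Nat.Coprime d Δ)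
    (a b : ℤ) (hab : Int.gcd (Int.gcd a b : ℤ) (d : ℤ) = 1)
    (H : AddSubgroup (ℤ × ℤ))
    (hH : (H : Set (ℤ × ℤ)) = {y : ℤ × ℤ |
      (∃ lam : ℤ, y.1 ≡ lam * a [ZMOD (d : ℤ)] ∧ y.2 ≡ lam * b [ZMOD (d : ℤ)]) ∧
      ((e * Δ : ℤ) ∣ y.1 ∧ (e * Δ : ℤ) ∣ y.2)}) :
    H.index = d * e * Δ ^ 2 := by
  have he0 : 0 < e := Nat.pos_of_dvd_of_pos he hd
  haveI : NeZero d := ⟨hd.ne'⟩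
  haveI : NeZero Δ := ⟨hΔ.ne'⟩
  have hg : Nat.Coprime (Int.gcd a b) d := by
    rwa [Int.gcd_natCast_natCast] at hab
  have hge : Nat.Coprime e (Int.gcd a b) := ((hg.coprime_dvd_right he)).symm
  have heΔ : Nat.Coprime e Δ := Nat.Coprime.coprime_dvd_left he hcop
  set v : ZMod d × ZMod d := (((e * a : ℤ) : ZMod d), ((e * b : ℤ) : ZMod d)) with hv
  set f : ℤ × ℤ →+ (ZMod d × ZMod d) :=
    AddMonoidHom.prodMap (Int.castAddHom (ZMod d)) (Int.castAddHom (ZMod d)) with hf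
  set g : ℤ × ℤ →+ (ZMod Δ × ZMod Δ) :=
    AddMonoidHom.prodMap (Int.castAddHom (ZMod Δ)) (Int.castAddHom (ZMod Δ)) with hgdef
  set F : ℤ × ℤ →+ (ZMod d × ZMod d) × (ZMod Δ × ZMod Δ) := f.prod g with hFdef
  -- CRT surjectivity
  have hcrt : ∀ (r : ZMod d) (s : ZMod Δ), ∃ x : ℤ, (x : ZMod d) = r ∧ (x : ZMod Δ) = s := by
    intro r s
    obtain ⟨x, hx⟩ := ZMod.intCast_surjective
      ((ZMod.chineseRemainder hcop).symm (r, s) : ZMod (d * Δ))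
    have h2 := congrArg (ZMod.chineseRemainder hcop) hx
    rw [RingEquiv.apply_symm_apply, map_intCast] at h2
    refine ⟨x, ?_, ?_⟩
    · have := congrArg Prod.fst h2
      simpa using this
    · have := congrArg Prod.snd h2
      simpa using this
  have hFsurj : Function.Surjective F := by
    rintro ⟨⟨r1, r2⟩, s1, s2⟩
    obtain ⟨x, hx1, hx2⟩ := hcrt r1 s1
    obtain ⟨y, hy1, hy2⟩ := hcrt r2 s2
    refine ⟨(x, y), ?_⟩
    simp [hFdef, hf, hgdef, AddMonoidHom.prod_apply, hx1, hx2, hy1, hy2, Prod.ext_iff]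
  -- the key subgroup identification
  have hkey : H = AddSubgroup.comap F ((AddSubgroup.zmultiples v).prod ⊥) := by
    ext y
    obtain ⟨y1, y2⟩ := y
    have hmem : (y1, y2) ∈ H ↔ ((∃ lam : ℤ, y1 ≡ lam * a [ZMOD (d : ℤ)] ∧ y2 ≡ lam * b [ZMOD (d : ℤ)]) ∧
        ((e * Δ : ℤ) ∣ y1 ∧ (e * Δ : ℤ) ∣ y2)) := by
      constructor
      · intro h; exact (Set.ext_iff.mp hH (y1, y2)).mp h
      · intro h; exact (Set.ext_iff.mp hH (y1, y2)).mpr h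
    rw [hmem]
    rw [AddSubgroup.mem_comap, AddSubgroup.mem_prod, AddSubgroup.mem_zmultiples_iff,
      AddSubgroup.mem_bot]
    have hFy : F (y1, y2) = (((y1 : ZMod d), (y2 : ZMod d)), ((y1 : ZMod Δ), (y2 : ZMod Δ))) := by
      simp [hFdef, hf, hgdef]
    rw [hFy]
    have hsm : ∀ n : ℤ, n • v = (((n * (e * a) : ℤ) : ZMod d), ((n * (e * b) : ℤ) : ZMod d)) := by
      intro n
      simp only [hv, Prod.smul_mk, zsmul_eq_mul, Prod.mk.injEq]
      constructor <;> push_cast <;> ring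
    constructor
    · rintro ⟨⟨lam, h1, h2⟩, hd1, hd2⟩
      have hedvd : (e : ℤ) ∣ (d : ℤ) := Int.natCast_dvd_natCast.mpr he
      have hey1 : (e : ℤ) ∣ y1 := dvd_trans (dvd_mul_right (e : ℤ) (Δ : ℤ)) hd1
      have hey2 : (e : ℤ) ∣ y2 := dvd_trans (dvd_mul_right (e : ℤ) (Δ : ℤ)) hd2
      have h1' : (e : ℤ) ∣ lam * a := by
        have hda : (d : ℤ) ∣ lam * a - y1 := Int.ModEq.dvd h1
        have : (e : ℤ) ∣ lam * a - y1 := dvd_trans hedvd hda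
        simpa using dvd_add this hey1
      have h2' : (e : ℤ) ∣ lam * b := by
        have hdb : (d : ℤ) ∣ lam * b - y2 := Int.ModEq.dvd h2
        have : (e : ℤ) ∣ lam * b - y2 := dvd_trans hedvd hdb
        simpa using dvd_add this hey2
      have hgcd : (e : ℤ) ∣ ((lam.natAbs * Int.gcd a b : ℕ) : ℤ) := by
        have := Int.dvd_coe_gcd h1' h2'
        rwa [Int.gcd_mul_left] at this
      have hnat : e ∣ lam.natAbs * Int.gcd a b := Int.natCast_dvd_natCast.mp hgcd
      have helam : e ∣ lam.natAbs := (Nat.Coprime.dvd_of_dvd_mul_right hge hnat)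
      have helamz : (e : ℤ) ∣ lam := Int.dvd_natAbs.mp (Int.natCast_dvd_natCast.mpr helam)
      obtain ⟨n, hn⟩ := helamz
      refine ⟨⟨n, ?_⟩, ?_⟩
      · rw [hsm n, Prod.mk.injEq]
        refine ⟨?_, ?_⟩
        · have heq : n * ((e : ℤ) * a) = lam * a := by rw [hn]; ring
          rw [ZMod.intCast_eq_intCast_iff]
          calc (n * (↑e * a)) = lam * a := heq
            _ ≡ y1 [ZMOD (d:ℤ)] := h1.symm
        · have heq : n * ((e : ℤ) * b) = lam * b := by rw [hn]; ring
          rw [ZMod.intCast_eq_intCast_iff]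
          calc (n * (↑e * b)) = lam * b := heq
            _ ≡ y2 [ZMOD (d:ℤ)] := h2.symm
      · rw [Prod.mk_eq_zero, ZMod.intCast_zmod_eq_zero_iff_dvd, ZMod.intCast_zmod_eq_zero_iff_dvd]
        exact ⟨dvd_trans (dvd_mul_left (Δ : ℤ) (e : ℤ)) hd1,
          dvd_trans (dvd_mul_left (Δ : ℤ) (e : ℤ)) hd2⟩
    · rintro ⟨⟨n, hnv⟩, hz⟩
      rw [hsm n, Prod.mk.injEq] at hnv
      obtain ⟨h1, h2⟩ := hnv
      rw [Prod.mk_eq_zero, ZMod.intCast_zmod_eq_zero_iff_dvd,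
        ZMod.intCast_zmod_eq_zero_iff_dvd] at hz
      obtain ⟨hz1, hz2⟩ := hz
      rw [ZMod.intCast_eq_intCast_iff] at h1 h2
      have hedvd : (e : ℤ) ∣ (d : ℤ) := Int.natCast_dvd_natCast.mpr he
      have hey1 : (e : ℤ) ∣ y1 := by
        have hda : (d : ℤ) ∣ y1 - n * ((e:ℤ) * a) := Int.ModEq.dvd h1
        have h' : (e : ℤ) ∣ y1 - n * ((e:ℤ) * a) := dvd_trans hedvd hda
        have h'' : (e : ℤ) ∣ n * ((e:ℤ) * a) := Dvd.dvd.mul_left (dvd_mul_right _ _) n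
        simpa using dvd_add h' h''
      have hey2 : (e : ℤ) ∣ y2 := by
        have hda : (d : ℤ) ∣ y2 - n * ((e:ℤ) * b) := Int.ModEq.dvd h2
        have h' : (e : ℤ) ∣ y2 - n * ((e:ℤ) * b) := dvd_trans hedvd hda
        have h'' : (e : ℤ) ∣ n * ((e:ℤ) * b) := Dvd.dvd.mul_left (dvd_mul_right _ _) n
        simpa using dvd_add h' h''
      have hco : IsCoprime (e : ℤ) (Δ : ℤ) := by
        rw [Int.isCoprime_iff_gcd_eq_one, Int.gcd_natCast_natCast]
        exact heΔ
      refine ⟨⟨n * e, ?_, ?_⟩, hco.mul_dvd hey1 hz1, hco.mul_dvd hey2 hz2⟩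
      · have heq : n * e * a = n * ((e:ℤ) * a) := by ring
        rw [heq]; exact h1.symm
      · have heq : n * e * b = n * ((e:ℤ) * b) := by ring
        rw [heq]; exact h2.symm
  -- order of v
  have hordv : ∀ n : ℕ, n • v = 0 ↔ (d / e) ∣ n := by
    intro n
    have hsm : n • v =
        (((((n * e : ℕ) : ℤ) * a : ℤ) : ZMod d), ((((n * e : ℕ) : ℤ) * b : ℤ) : ZMod d)) := by
      simp only [hv, Prod.smul_mk, nsmul_eq_mul, Prod.mk.injEq]
      constructor <;> push_cast <;> ring
    rw [hsm, Prod.mk_eq_zero, ZMod.intCast_zmod_eq_zero_iff_dvd,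
      ZMod.intCast_zmod_eq_zero_iff_dvd]
    constructor
    · rintro ⟨ha', hb'⟩
      have hgcd : (d : ℤ) ∣ ((Int.gcd (((n * e : ℕ) : ℤ) * a) (((n * e : ℕ) : ℤ) * b) : ℕ) : ℤ) :=
        Int.dvd_coe_gcd ha' hb'
      rw [Int.gcd_mul_left, Int.natAbs_natCast] at hgcd
      have hnat : d ∣ (n * e) * Int.gcd a b := Int.natCast_dvd_natCast.mp hgcd
      have hdn : d ∣ n * e := Nat.Coprime.dvd_of_dvd_mul_right hg.symm hnat
      have hde : (d / e) * e ∣ n * e := by rwa [Nat.div_mul_cancel he]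
      exact (Nat.mul_dvd_mul_iff_right he0).mp hde
    · intro hdn
      have hne : d ∣ n * e := by
        have : (d / e) * e ∣ n * e := Nat.mul_dvd_mul_right hdn e
        rwa [Nat.div_mul_cancel he] at this
      have hz : (d : ℤ) ∣ ((n * e : ℕ) : ℤ) := Int.natCast_dvd_natCast.mpr hne
      exact ⟨hz.mul_right a, hz.mul_right b⟩
  have hord : addOrderOf v = d / e :=
    Nat.dvd_antisymm (addOrderOf_dvd_of_nsmul_eq_zero ((hordv _).mpr dvd_rfl))
      ((hordv _).mp (addOrderOf_nsmul_eq_zero v))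
  have hcardK : Nat.card (AddSubgroup.zmultiples v) = d / e := by
    rw [Nat.card_zmultiples, hord]
  have hKindex : (AddSubgroup.zmultiples v).index = d * e := by
    have h := AddSubgroup.index_mul_card (AddSubgroup.zmultiples v)
    rw [hcardK] at h
    have hG : Nat.card (ZMod d × ZMod d) = d * d := by
      simp [Nat.card_prod, Nat.card_zmod]
    rw [hG] at h
    have hdepos : 0 < d / e := Nat.div_pos (Nat.le_of_dvd hd he) he0
    have h2 : (d * e) * (d / e) = d * d := by
      rw [mul_assoc, Nat.mul_div_cancel' he]
    exact Nat.eq_of_mul_eq_mul_right hdepos (h.trans h2.symm)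
  rw [hkey, AddSubgroup.index_comap_of_surjective _ hFsurj, aux_index_prod,
    hKindex, AddSubgroup.index_bot]
  have : Nat.card (ZMod Δ × ZMod Δ) = Δ * Δ := by
    simp [Nat.card_prod, Nat.card_zmod]
  rw [this]
  ring
end

section
/- Let f be a monic cubic polynomial over ℤ and p a prime not dividing the discriminant of f. Let ρ₁(d) be the number of pairs (a,b) mod d with f(a,b) ≡ 0 (mod d), where f(a,b) is the homogenization of f. Then for all α ∈ ℕ, ρ₁(p^α) ≪ p^{4α/3}, with an absolute implied constant; in particular ρ₁(p^α) ≤ 3 p^{α+⌈α/3⌉}/(p−1) + p^{2(α−⌈α/3⌉)}. -/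
open Finset

namespace Stmt8

/-- integral homogenized cubic -/
def Fint (B C D : ℤ) (a b : ℤ) : ℤ := a^3 + B*a^2*b + C*a*b^2 + D*b^3

variable (B C D : ℤ)

/-- solution set mod M -/
def solSet (M : ℕ) [NeZero M] : Finset (ZMod M × ZMod M) :=
  univ.filter (fun x => x.1^3 + (B:ZMod M)*x.1^2*x.2 + (C:ZMod M)*x.1*x.2^2 + (D:ZMod M)*x.2^3 = 0)

lemma mem_solSet_iff {M : ℕ} [NeZero M] (x : ZMod M × ZMod M) :
    x ∈ solSet B C D M ↔
      x.1^3 + (B:ZMod M)*x.1^2*x.2 + (C:ZMod M)*x.1*x.2^2 + (D:ZMod M)*x.2^3 = 0 := by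
  simp [solSet]

lemma mem_solSet_iff_dvd {M : ℕ} [NeZero M] (a b : ℕ) :
    ((a : ZMod M), (b : ZMod M)) ∈ solSet B C D M ↔ (M : ℤ) ∣ Fint B C D a b := by
  rw [mem_solSet_iff, ← ZMod.intCast_zmod_eq_zero_iff_dvd]
  constructor <;> intro h <;> [skip; skip] <;>
    · rw [← h]; push_cast [Fint]; ring

lemma natCast_val_eq_self {M : ℕ} [NeZero M] (x : ZMod M) : ((x.val : ℕ) : ZMod M) = x :=
  ZMod.natCast_rightInverse x

lemma mem_solSet_iff_dvd' {M : ℕ} [NeZero M] (x : ZMod M × ZMod M) :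
    x ∈ solSet B C D M ↔ (M : ℤ) ∣ Fint B C D x.1.val x.2.val := by
  rw [← mem_solSet_iff_dvd]
  rw [natCast_val_eq_self, natCast_val_eq_self]

/-- discriminant is in the ideal (g, g') -/
lemma disc_mem {R : Type*} [CommRing R] (b c d t : R) (h1 : t^3+b*t^2+c*t+d = 0)
    (h2 : 3*t^2+2*b*t+c = 0) :
    b^2*c^2 - 4*c^3 - 4*b^3*d - 27*d^2 + 18*(b*c*d) = 0 := by
  linear_combination ((18*c-6*b^2)*t + 15*b*c - 4*b^3 - 27*d) * h1 +
    ((2*b^2-6*c)*t^2 + (2*b^3-7*b*c+9*d)*t + (b^2*c+3*b*d-4*c^2)) * h2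

variable (p : ℕ) [hp : Fact p.Prime]

/-- roots of the monic cubic in `ZMod p` number at most 3 -/
lemma card_roots_modp :
    (univ.filter (fun t : ZMod p =>
        t^3 + (B:ZMod p)*t^2 + (C:ZMod p)*t + (D:ZMod p) = 0)).card ≤ 3 := by
  set P : Cubic (ZMod p) := ⟨1, B, C, D⟩ with hP
  have hne : P.toPoly ≠ 0 := Cubic.ne_zero_of_a_ne_zero (by simp [hP])
  have hsub : (univ.filter (fun t : ZMod p =>
      t^3 + (B:ZMod p)*t^2 + (C:ZMod p)*t + (D:ZMod p) = 0)) ⊆ P.roots.toFinset := by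
    intro t ht
    simp only [mem_filter] at ht
    rw [Multiset.mem_toFinset, Cubic.mem_roots_iff hne]
    simpa [hP] using ht.2
  exact (Finset.card_le_card hsub).trans Cubic.card_roots_le

section Level
variable (n : ℕ)

/-- reduction map -/
def π (hn : n ≠ 0) : ZMod (p^n) →+* ZMod p := ZMod.castHom (dvd_pow_self p hn) (ZMod p)

lemma π_eq_val (hn : n ≠ 0) (x : ZMod (p^n)) : π p n hn x = ((x.val : ℕ) : ZMod p) := by
  rw [π, ZMod.castHom_apply]; exact (ZMod.natCast_val x).symm

lemma π_eq_zero_iff (hn : n ≠ 0) (x : ZMod (p^n)) : π p n hn x = 0 ↔ p ∣ x.val := by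
  rw [π_eq_val, ZMod.natCast_eq_zero_iff]

lemma isUnit_iff (hn : n ≠ 0) (x : ZMod (p^n)) : IsUnit x ↔ ¬ p ∣ x.val := by
  conv_lhs => rw [← natCast_val_eq_self x]
  rw [ZMod.isUnit_iff_coprime, Nat.coprime_pow_right_iff (Nat.pos_of_ne_zero hn),
    Nat.coprime_comm]
  exact hp.out.coprime_iff_not_dvd

end Level

variable (hd : ¬ (p:ℤ) ∣ (B^2*C^2 - 4*C^3 - 4*B^3*D - 27*D^2 + 18*(B*C*D)))

include hd

lemma root_inj (n : ℕ) (hn : n ≠ 0) {t₁ t₂ : ZMod (p^n)}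
    (h1 : t₁^3 + (B:ZMod (p^n))*t₁^2 + (C:ZMod (p^n))*t₁ + (D:ZMod (p^n)) = 0)
    (h2 : t₂^3 + (B:ZMod (p^n))*t₂^2 + (C:ZMod (p^n))*t₂ + (D:ZMod (p^n)) = 0)
    (hc : π p n hn t₁ = π p n hn t₂) : t₁ = t₂ := by
  set h : ZMod (p^n) := t₂^2 + t₁*t₂ + t₁^2 + (B:ZMod (p^n))*(t₂+t₁) + (C:ZMod (p^n)) with hh
  have hsh : (t₂ - t₁) * h = 0 := by rw [hh]; linear_combination h2 - h1
  set τ : ZMod p := π p n hn t₁ with hτ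
  have hu : IsUnit h := by
    rw [isUnit_iff p n hn, ← π_eq_zero_iff p n hn]
    intro h0
    have hπh : (3:ZMod p)*τ^2 + 2*(B:ZMod p)*τ + (C:ZMod p) = 0 := by
      rw [hh] at h0
      simp only [map_add, map_mul, map_pow, map_intCast, ← hc, ← hτ] at h0
      linear_combination h0
    have hπ1 : τ^3 + (B:ZMod p)*τ^2 + (C:ZMod p)*τ + (D:ZMod p) = 0 := by
      have := congrArg (π p n hn) h1
      simpa only [map_add, map_mul, map_pow, map_intCast, map_zero, ← hτ] using this
    have := disc_mem (B:ZMod p) (C:ZMod p) (D:ZMod p) τ hπ1 hπh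
    apply hd
    rw [← ZMod.intCast_zmod_eq_zero_iff_dvd]
    push_cast
    linear_combination this
  have : t₂ - t₁ = 0 := (hu.mul_left_eq_zero).mp hsh
  exact (sub_eq_zero.mp this).symm

lemma card_roots_lift (n : ℕ) (hn : n ≠ 0) :
    (univ.filter (fun t : ZMod (p^n) =>
      t^3 + (B:ZMod (p^n))*t^2 + (C:ZMod (p^n))*t + (D:ZMod (p^n)) = 0)).card ≤ 3 := by
  refine le_trans (Finset.card_le_card_of_injOn (π p n hn) ?_ ?_) (card_roots_modp B C D p)
  · intro t ht
    simp only [Finset.mem_coe, mem_filter, mem_univ, true_and] at ht ⊢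
    have := congrArg (π p n hn) ht
    simpa only [map_add, map_mul, map_pow, map_intCast, map_zero] using this
  · intro t₁ h₁ t₂ h₂ hc
    simp only [coe_filter, Set.mem_setOf_eq] at h₁ h₂
    exact root_inj B C D p hd n hn h₁.2 h₂.2 hc

omit hd

def primSet (n : ℕ) : Finset (ZMod (p^n) × ZMod (p^n)) :=
  (solSet B C D (p^n)).filter (fun x => ¬(p ∣ x.1.val ∧ p ∣ x.2.val))

def impSet (n : ℕ) : Finset (ZMod (p^n) × ZMod (p^n)) :=
  (solSet B C D (p^n)).filter (fun x => p ∣ x.1.val ∧ p ∣ x.2.val)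

lemma card_split (n : ℕ) :
    (solSet B C D (p^n)).card = (impSet B C D p n).card + (primSet B C D p n).card :=
  (Finset.card_filter_add_card_filter_not
    (fun x : ZMod (p^n) × ZMod (p^n) => p ∣ x.1.val ∧ p ∣ x.2.val)).symm

lemma isUnit_snd_of_prim {n : ℕ} (hn : n ≠ 0) {x : ZMod (p^n) × ZMod (p^n)}
    (hx : x ∈ primSet B C D p n) : IsUnit x.2 := by
  rw [primSet, mem_filter, mem_solSet_iff] at hx
  obtain ⟨hs, hpr⟩ := hx
  rw [isUnit_iff p n hn]
  intro hdvd
  apply hpr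
  refine ⟨?_, hdvd⟩
  rw [← π_eq_zero_iff p n hn] at hdvd ⊢
  have := congrArg (π p n hn) hs
  simp only [map_add, map_mul, map_pow, map_intCast, map_zero, hdvd, mul_zero,
    zero_pow, add_zero, (by norm_num : (3:ℕ) ≠ 0), (by norm_num : (2:ℕ) ≠ 0)] at this
  have h3 : (π p n hn x.1)^3 = 0 := by linear_combination this
  exact pow_eq_zero_iff (by norm_num) |>.mp h3

include hd in
lemma card_prim (n : ℕ) (hn : n ≠ 0) :
    (primSet B C D p n).card ≤ 3 * (p^(n-1) * (p-1)) := by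
  classical
  have hcard : (primSet B C D p n).card ≤
      ((univ.filter (fun t : ZMod (p^n) =>
        t^3 + (B:ZMod (p^n))*t^2 + (C:ZMod (p^n))*t + (D:ZMod (p^n)) = 0)) ×ˢ
        (univ : Finset (ZMod (p^n))ˣ)).card := by
    refine Finset.card_le_card_of_injOn
      (fun x => if h : IsUnit x.2 then (x.1 * ↑h.unit⁻¹, h.unit) else (0, 1)) ?_ ?_
    · intro x hx
      have hu := isUnit_snd_of_prim B C D p hn hx
      rw [Finset.mem_coe, primSet, mem_filter, mem_solSet_iff] at hx
      obtain ⟨hs, -⟩ := hx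
      beta_reduce
      rw [dif_pos hu, Finset.mem_coe, Finset.mem_product, mem_filter]
      refine ⟨⟨mem_univ _, ?_⟩, mem_univ _⟩
      have hx2 : x.2 * (↑hu.unit⁻¹ : ZMod (p^n)) = 1 := hu.mul_val_inv
      set v : ZMod (p^n) := (↑hu.unit⁻¹ : ZMod (p^n))
      linear_combination v^3 * hs - ((B:ZMod (p^n))*x.1^2*v^2
        + (C:ZMod (p^n))*x.1*v*(1+x.2*v)
        + (D:ZMod (p^n))*(1+x.2*v+(x.2*v)^2)) * hx2
    · intro x hx y hy hxy
      rw [Finset.mem_coe] at hx hy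
      have hux := isUnit_snd_of_prim B C D p hn hx
      have huy := isUnit_snd_of_prim B C D p hn hy
      beta_reduce at hxy
      rw [dif_pos hux, dif_pos huy, Prod.mk.injEq] at hxy
      obtain ⟨h1, h2⟩ := hxy
      have h2' : x.2 = y.2 := by rw [← hux.unit_spec, ← huy.unit_spec, h2]
      have h1' : x.1 = y.1 := by
        have h3 := congrArg (· * (↑hux.unit : ZMod (p^n))) h1
        simp only [mul_assoc] at h3
        rw [h2] at h3
        simpa [← Units.val_mul] using h3
      exact Prod.ext h1' h2'
  refine hcard.trans ?_
  rw [Finset.card_product, Finset.card_univ, ZMod.card_units_eq_totient,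
    Nat.totient_prime_pow hp.out (Nat.pos_of_ne_zero hn)]
  exact Nat.mul_le_mul_right _ (card_roots_lift B C D p hd n hn)

lemma card_imp_one : (impSet B C D p 1).card ≤ 1 := by
  have h : impSet B C D p 1 ⊆ {((0 : ZMod (p^1)), (0 : ZMod (p^1)))} := by
    intro x hx
    rw [impSet, mem_filter] at hx
    obtain ⟨-, h1, h2⟩ := hx
    have hv1 : x.1.val = 0 := Nat.eq_zero_of_dvd_of_lt h1 (by simpa using x.1.val_lt)
    have hv2 : x.2.val = 0 := Nat.eq_zero_of_dvd_of_lt h2 (by simpa using x.2.val_lt)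
    have e1 : x.1 = 0 := by
      apply ZMod.val_injective; rw [hv1, ZMod.val_zero]
    have e2 : x.2 = 0 := by
      apply ZMod.val_injective; rw [hv2, ZMod.val_zero]
    simp [Finset.mem_singleton, Prod.ext_iff, e1, e2]
  exact (Finset.card_le_card h).trans (by simp)

lemma card_imp_two : (impSet B C D p 2).card ≤ p^2 := by
  have hcard : (impSet B C D p 2).card ≤ ((range p) ×ˢ (range p)).card := by
    refine Finset.card_le_card_of_injOn (fun x => (x.1.val / p, x.2.val / p)) ?_ ?_
    · intro x hx
      simp only [Finset.mem_coe, Finset.mem_product, Finset.mem_range]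
      constructor <;>
      · apply Nat.div_lt_iff_lt_mul hp.out.pos |>.mpr
        calc _ < p^2 := ZMod.val_lt _
        _ = p * p := sq p
    · intro x hx y hy hxy
      rw [Finset.mem_coe, impSet, mem_filter] at hx hy
      obtain ⟨-, hx1, hx2⟩ := hx
      obtain ⟨-, hy1, hy2⟩ := hy
      simp only [Prod.mk.injEq] at hxy
      have e1 : x.1.val = y.1.val := by
        rw [← Nat.mul_div_cancel' hx1, ← Nat.mul_div_cancel' hy1, hxy.1]
      have e2 : x.2.val = y.2.val := by
        rw [← Nat.mul_div_cancel' hx2, ← Nat.mul_div_cancel' hy2, hxy.2]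
      exact Prod.ext (ZMod.val_injective _ e1) (ZMod.val_injective _ e2)
  simpa [sq] using hcard

lemma card_imp (n : ℕ) (hn : 3 ≤ n) :
    (impSet B C D p n).card ≤ p^4 * (solSet B C D (p^(n-3))).card := by
  classical
  have hp0 : (0:ℕ) < p := hp.out.pos
  set f : ZMod (p^n) × ZMod (p^n) → ZMod (p^(n-3)) × ZMod (p^(n-3)) := fun x =>
    (((x.1.val / p : ℕ) : ZMod (p^(n-3))), ((x.2.val / p : ℕ) : ZMod (p^(n-3)))) with hf
  have himg : (impSet B C D p n).image f ⊆ solSet B C D (p^(n-3)) := by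
    intro y hy
    rw [Finset.mem_image] at hy
    obtain ⟨x, hx, rfl⟩ := hy
    rw [impSet, mem_filter, mem_solSet_iff_dvd'] at hx
    obtain ⟨hs, h1, h2⟩ := hx
    rw [hf]
    rw [mem_solSet_iff_dvd]
    have ha : (x.1.val : ℤ) = p * (x.1.val / p : ℕ) := by exact_mod_cast (Nat.mul_div_cancel' h1).symm
    have hb : (x.2.val : ℤ) = p * (x.2.val / p : ℕ) := by exact_mod_cast (Nat.mul_div_cancel' h2).symm
    rw [ha, hb] at hs
    have hfact : Fint B C D ((p:ℤ) * (x.1.val / p : ℕ)) ((p:ℤ) * (x.2.val / p : ℕ))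
        = (p:ℤ)^3 * Fint B C D (x.1.val / p : ℕ) (x.2.val / p : ℕ) := by
      simp only [Fint]; ring
    rw [hfact] at hs
    replace hs : ((p:ℤ)^3 * (p:ℤ)^(n-3)) ∣
        (p:ℤ)^3 * Fint B C D (x.1.val / p : ℕ) (x.2.val / p : ℕ) := by
      rw [← pow_add, show 3+(n-3) = n from by omega]
      exact_mod_cast hs
    have := (mul_dvd_mul_iff_left (by positivity : ((p:ℤ)^3) ≠ 0)).mp hs
    exact_mod_cast this
  have hfib : ∀ y ∈ (impSet B C D p n).image f,
      ((impSet B C D p n).filter (fun x => f x = y)).card ≤ p^4 := by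
    intro y hy
    have hc : (((impSet B C D p n).filter (fun x => f x = y)).card : ℕ) ≤
        ((range (p^2)) ×ˢ (range (p^2))).card := by
      refine Finset.card_le_card_of_injOn
        (fun x => (x.1.val / p / p^(n-3), x.2.val / p / p^(n-3))) ?_ ?_
      · intro x hx
        simp only [Finset.mem_coe, Finset.mem_product, Finset.mem_range]
        have hpow : p ^ 2 * (p * p ^ (n-3)) = p ^ n := by
          rw [show p * p^(n-3) = p^(n-2) by
            rw [show n-2 = (n-3)+1 from by omega, pow_succ']
          , ← pow_add]
          congr 1
          omega
        constructor <;>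
        · rw [Nat.div_div_eq_div_mul]
          apply Nat.div_lt_iff_lt_mul (by positivity) |>.mpr
          calc _ < p^n := ZMod.val_lt _
          _ = p ^ 2 * (p * p ^ (n-3)) := hpow.symm
      · intro x hx y' hy' hxy
        rw [Finset.mem_coe, mem_filter] at hx hy'
        obtain ⟨hx, hfx⟩ := hx
        obtain ⟨hy', hfy⟩ := hy'
        rw [impSet, mem_filter] at hx hy'
        obtain ⟨-, hx1, hx2⟩ := hx
        obtain ⟨-, hy1, hy2⟩ := hy'
        rw [← hfy] at hfx
        rw [hf, Prod.mk.injEq] at hfx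
        simp only [Prod.mk.injEq] at hxy
        have m1 := (ZMod.natCast_eq_natCast_iff _ _ _).mp hfx.1
        have m2 := (ZMod.natCast_eq_natCast_iff _ _ _).mp hfx.2
        rw [Nat.ModEq] at m1 m2
        have q1 := hxy.1
        have q2 := hxy.2
        have e1 : x.1.val / p = y'.1.val / p := by
          conv_lhs => rw [← Nat.div_add_mod (x.1.val / p) (p^(n-3))]
          conv_rhs => rw [← Nat.div_add_mod (y'.1.val / p) (p^(n-3))]
          rw [m1, q1]
        have e2 : x.2.val / p = y'.2.val / p := by
          conv_lhs => rw [← Nat.div_add_mod (x.2.val / p) (p^(n-3))]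
          conv_rhs => rw [← Nat.div_add_mod (y'.2.val / p) (p^(n-3))]
          rw [m2, q2]
        have v1 : x.1.val = y'.1.val := by
          rw [← Nat.mul_div_cancel' hx1, ← Nat.mul_div_cancel' hy1, e1]
        have v2 : x.2.val = y'.2.val := by
          rw [← Nat.mul_div_cancel' hx2, ← Nat.mul_div_cancel' hy2, e2]
        exact Prod.ext (ZMod.val_injective _ v1) (ZMod.val_injective _ v2)
    calc _ ≤ ((range (p^2)) ×ˢ (range (p^2))).card := hc
    _ = p^4 := by rw [Finset.card_product, Finset.card_range]; ring
  calc (impSet B C D p n).card ≤ p^4 * ((impSet B C D p n).image f).card :=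
        Finset.card_le_mul_card_image _ _ hfib
  _ ≤ p^4 * (solSet B C D (p^(n-3))).card :=
        Nat.mul_le_mul_left _ (Finset.card_le_card himg)

lemma key (m : ℕ) :
    p^4 * (3*(p^((m+2)/3)-1)*p^(m-1) + p^(2*(m-(m+2)/3))) + 3*(p^(m+2)*(p-1))
      ≤ 3*(p^((m+2)/3+1)-1)*p^(m+2) + p^(2*(m+2-(m+2)/3)) := by
  have hp1 : 1 ≤ p := hp.out.pos
  have h2 : p^4 * p^(2*(m-(m+2)/3)) = p^(2*(m+2-(m+2)/3)) := by
    rw [← pow_add]; congr 1; omega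
  have hmain : p^4 * (3*(p^((m+2)/3)-1)*p^(m-1)) + 3*(p^(m+2)*(p-1))
      ≤ 3*(p^((m+2)/3+1)-1)*p^(m+2) := by
    rcases m with _|k
    · norm_num
      exact le_of_eq (by ring)
    · have hb : ((k+1)+2)/3 = (k+3)/3 := by omega
      set b := ((k+1)+2)/3 with hbdef
      set a := p^b with hadef
      have ha : 1 ≤ a := Nat.one_le_iff_ne_zero.mpr (pow_ne_zero _ (by omega))
      have e : p^4 * (3*(a-1)*p^((k+1)-1)) + 3*(p^((k+1)+2)*(p-1))
          = 3*((a-1)*p + (p-1)) * p^((k+1)+2) := by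
        rw [show (k+1)-1 = k from rfl]
        ring
      have h1 : (a-1)*p + (p-1) = a*p - 1 := by
        have hs : (a-1)*p = a*p - 1*p := Nat.sub_mul a 1 p
        have hap : p ≤ a*p := Nat.le_mul_of_pos_left p (by omega)
        omega
      rw [e, h1, pow_succ, pow_succ p b, ← hadef]
  calc p^4 * (3*(p^((m+2)/3)-1)*p^(m-1) + p^(2*(m-(m+2)/3))) + 3*(p^(m+2)*(p-1))
      = (p^4 * (3*(p^((m+2)/3)-1)*p^(m-1)) + 3*(p^(m+2)*(p-1))) + p^(2*(m+2-(m+2)/3)) := by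
        rw [mul_add, h2]; ring
  _ ≤ 3*(p^((m+2)/3+1)-1)*p^(m+2) + p^(2*(m+2-(m+2)/3)) := by
        exact Nat.add_le_add_right hmain _

include hd in
lemma main_nat (n : ℕ) :
    (solSet B C D (p^n)).card ≤ 3 * (p^((n+2)/3) - 1) * p^(n-1) + p^(2*(n - (n+2)/3)) := by
  induction n using Nat.strong_induction_on with
  | _ n ih =>
  obtain _|(_|(_|m)) := n
  · -- n = 0
    have h1 : (solSet B C D (p^0)).card ≤ 1 := by
      rw [solSet]
      refine (Finset.card_filter_le _ _).trans ?_
      rw [Finset.card_univ, Fintype.card_prod, ZMod.card]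
      simp
    simpa using h1
  · -- n = 1
    show (solSet B C D (p^1)).card ≤ 3*(p^((1+2)/3)-1)*p^(1-1) + p^(2*(1-(1+2)/3))
    have hsplit := card_split B C D p 1
    have hi := card_imp_one B C D p
    have hpr := card_prim B C D p hd 1 one_ne_zero
    norm_num at hsplit hi hpr ⊢
    omega
  · -- n = 2
    show (solSet B C D (p^2)).card ≤ 3*(p^((2+2)/3)-1)*p^(2-1) + p^(2*(2-(2+2)/3))
    have hsplit := card_split B C D p 2
    have hi := card_imp_two B C D p
    have hpr := card_prim B C D p hd 2 two_ne_zero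
    norm_num at hsplit hi hpr ⊢
    have hr : 3*(p*(p-1)) = 3*(p-1)*p := by ring
    linarith [hsplit, hi, hpr, hr]
  · -- n = m + 3
    show (solSet B C D (p^(m+3))).card ≤
      3*(p^((m+3+2)/3)-1)*p^(m+3-1) + p^(2*(m+3-(m+3+2)/3))
    have hsplit := card_split B C D p (m+3)
    have hI := card_imp B C D p (m+3) (by omega)
    rw [show m+3-3 = m from by omega] at hI
    have hP := card_prim B C D p hd (m+3) (by omega)
    rw [show m+3-1 = m+2 from by omega] at hP
    have hihm := ih m (by omega)
    have e1 : (m+3+2)/3 = (m+2)/3+1 := by omega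
    rw [e1, show m+3-1 = m+2 from by omega,
      show m+3-((m+2)/3+1) = m+2-(m+2)/3 from by omega]
    calc (solSet B C D (p^(m+3))).card
        = (impSet B C D p (m+3)).card + (primSet B C D p (m+3)).card := hsplit
    _ ≤ p^4 * (solSet B C D (p^m)).card + 3*(p^(m+2)*(p-1)) := add_le_add hI hP
    _ ≤ p^4 * (3*(p^((m+2)/3)-1)*p^(m-1) + p^(2*(m-(m+2)/3))) + 3*(p^(m+2)*(p-1)) :=
        Nat.add_le_add_right (Nat.mul_le_mul_left _ hihm) _
    _ ≤ 3*(p^((m+2)/3+1)-1)*p^(m+2) + p^(2*(m+2-(m+2)/3)) := key p m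

end Stmt8

open Stmt8 in
/-- For a monic cubic `f` over `ℤ` and a prime `p` not dividing its discriminant, the
number `ρ₁(p^α)` of pairs `(a,b)` mod `p^α` with `f(a,b) ≡ 0 (mod p^α)` (homogenized `f`)
satisfies `ρ₁(p^α) ≤ 3 p^{α+⌈α/3⌉}/(p−1) + p^{2(α−⌈α/3⌉)}`, and consequently
`ρ₁(p^α) ≪ p^{4α/3}` with an absolute implied constant.  (Here `⌈α/3⌉ = (α+2)/3` in
natural-number arithmetic.) -/
theorem stmt_8 :
    ∃ C : ℝ, 0 < C ∧
      ∀ (p : ℕ), p.Prime → ∀ (c : Cubic ℤ), c.a = 1 → ¬ (p : ℤ) ∣ c.discr → ∀ α : ℕ,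
        ((Nat.card {x : ZMod (p ^ α) × ZMod (p ^ α) //
            (c.a : ZMod (p ^ α)) * x.1 ^ 3 + (c.b : ZMod (p ^ α)) * x.1 ^ 2 * x.2 +
              (c.c : ZMod (p ^ α)) * x.1 * x.2 ^ 2 + (c.d : ZMod (p ^ α)) * x.2 ^ 3 = 0} : ℝ) ≤
          3 * (p : ℝ) ^ (α + (α + 2) / 3) / ((p : ℝ) - 1) +
            (p : ℝ) ^ (2 * (α - (α + 2) / 3))) ∧
        ((Nat.card {x : ZMod (p ^ α) × ZMod (p ^ α) //
            (c.a : ZMod (p ^ α)) * x.1 ^ 3 + (c.b : ZMod (p ^ α)) * x.1 ^ 2 * x.2 +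
              (c.c : ZMod (p ^ α)) * x.1 * x.2 ^ 2 + (c.d : ZMod (p ^ α)) * x.2 ^ 3 = 0} : ℝ) ≤
          C * (p : ℝ) ^ ((4 * (α : ℝ)) / 3)) := by
  refine ⟨4, by norm_num, ?_⟩
  intro p hpp c ha hdisc α
  haveI : Fact p.Prime := ⟨hpp⟩
  have hd : ¬ (p:ℤ) ∣ (c.b^2*c.c^2 - 4*c.c^3 - 4*c.b^3*c.d - 27*c.d^2 + 18*(c.b*c.c*c.d)) := by
    intro h
    apply hdisc
    have : c.discr = c.b^2*c.c^2 - 4*c.c^3 - 4*c.b^3*c.d - 27*c.d^2 + 18*(c.b*c.c*c.d) := by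
      rw [Cubic.discr, ha]; ring
    rw [this]; exact h
  have hcard : Nat.card {x : ZMod (p ^ α) × ZMod (p ^ α) //
      (c.a : ZMod (p ^ α)) * x.1 ^ 3 + (c.b : ZMod (p ^ α)) * x.1 ^ 2 * x.2 +
        (c.c : ZMod (p ^ α)) * x.1 * x.2 ^ 2 + (c.d : ZMod (p ^ α)) * x.2 ^ 3 = 0}
      = (solSet c.b c.c c.d (p^α)).card := by
    rw [Nat.card_eq_fintype_card, Fintype.card_subtype, solSet]
    refine congrArg Finset.card ?_
    apply Finset.filter_congr
    intro x _
    rw [ha]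
    push_cast
    constructor <;> intro h <;> linear_combination h
  rw [hcard]
  set N := (solSet c.b c.c c.d (p^α)).card with hNdef
  set b0 := (α+2)/3 with hb0
  have hN : N ≤ 3 * (p^b0 - 1) * p^(α-1) + p^(2*(α - b0)) := main_nat c.b c.c c.d p hd α
  have hp2 : (2:ℝ) ≤ (p:ℝ) := by exact_mod_cast hpp.two_le
  have hp1 : (1:ℝ) ≤ (p:ℝ) := by linarith
  have hppos : (0:ℝ) < (p:ℝ) := by linarith
  have hNr : (N:ℝ) ≤ 3 * ((p:ℝ)^b0 - 1) * (p:ℝ)^(α-1) + (p:ℝ)^(2*(α - b0)) := by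
    have := (Nat.cast_le (α := ℝ)).mpr hN
    push_cast [Nat.cast_sub (Nat.one_le_iff_ne_zero.mpr (pow_ne_zero _ hpp.pos.ne'))] at this
    convert this using 2 <;> push_cast <;> ring
  constructor
  · -- explicit bound
    have hterm : 3 * ((p:ℝ)^b0 - 1) * (p:ℝ)^(α-1) ≤ 3 * (p:ℝ)^(α + b0) / ((p:ℝ) - 1) := by
      rw [le_div_iff₀ (by linarith : (0:ℝ) < (p:ℝ) - 1)]
      rcases Nat.eq_zero_or_pos α with hα | hα
      · subst hα
        simp only [hb0]
        norm_num
      · have hb1 : (p:ℝ)^b0 - 1 ≤ (p:ℝ)^b0 := by linarith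
        have hpow : (p:ℝ)^b0 * (p:ℝ)^(α-1) * (p:ℝ) = (p:ℝ)^(α + b0) := by
          rw [mul_assoc, ← pow_succ, ← pow_add]
          congr 1
          omega
        calc 3 * ((p:ℝ)^b0 - 1) * (p:ℝ)^(α-1) * ((p:ℝ) - 1)
            ≤ 3 * ((p:ℝ)^b0) * (p:ℝ)^(α-1) * (p:ℝ) := by
              have h1 : (0:ℝ) ≤ (p:ℝ)^(α-1) := by positivity
              nlinarith [pow_pos hppos b0, pow_pos hppos (α-1)]
        _ = 3 * (p:ℝ)^(α + b0) := by rw [mul_assoc, mul_assoc, ← mul_assoc ((p:ℝ)^b0), hpow]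
    calc (N:ℝ) ≤ 3 * ((p:ℝ)^b0 - 1) * (p:ℝ)^(α-1) + (p:ℝ)^(2*(α - b0)) := hNr
    _ ≤ 3 * (p:ℝ)^(α + b0) / ((p:ℝ) - 1) + (p:ℝ)^(2*(α - b0)) := by linarith
  · -- asymptotic bound
    have key : ∀ e : ℕ, 3*e ≤ 4*α → (p:ℝ)^e ≤ (p:ℝ) ^ ((4 * (α:ℝ)) / 3) := by
      intro e he
      rw [← Real.rpow_natCast (p:ℝ) e]
      apply Real.rpow_le_rpow_of_exponent_le hp1
      rw [le_div_iff₀ (by norm_num : (0:ℝ) < 3)]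
      exact_mod_cast (by omega : e*3 ≤ 4*α)
    have h1 : 3 * ((p:ℝ)^b0 - 1) * (p:ℝ)^(α-1) ≤ 3 * (p:ℝ) ^ ((4 * (α:ℝ)) / 3) := by
      have e1 : (p:ℝ)^b0 * (p:ℝ)^(α-1) = (p:ℝ)^(b0 + (α-1)) := (pow_add _ _ _).symm
      have hb : (p:ℝ)^b0 - 1 ≤ (p:ℝ)^b0 := by linarith
      have h0 : (0:ℝ) ≤ (p:ℝ)^(α-1) := by positivity
      have := key (b0 + (α-1)) (by omega)
      nlinarith [pow_pos hppos b0, pow_pos hppos (α-1), pow_pos hppos (b0 + (α-1))]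
    have h2 : (p:ℝ)^(2*(α-b0)) ≤ (p:ℝ) ^ ((4 * (α:ℝ)) / 3) := key _ (by omega)
    calc (N:ℝ) ≤ 3 * ((p:ℝ)^b0 - 1) * (p:ℝ)^(α-1) + (p:ℝ)^(2*(α - b0)) := hNr
    _ ≤ 3 * (p:ℝ) ^ ((4 * (α:ℝ)) / 3) + (p:ℝ) ^ ((4 * (α:ℝ)) / 3) := by linarith
    _ = 4 * (p:ℝ) ^ ((4 * (α:ℝ)) / 3) := by ring
end
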